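/- Fix constants m, σ > 0, ϱ > 0 and let Ψ, φ ∈ C²([0,T]) satisfy Ψ'' (x) = (2m/σ²)(Ψ'(x))² + (2ϱ/σ²)Ψ(x), Ψ(0) = 0, Ψ'(0) = s̃, and φ''(x) < (2m/σ²)(φ'(x))² + (2ϱ/σ²)φ(x), φ(0) = 0, φ'(0) = s with s < s̃. Then φ'(x) ≤ Ψ'(x) for all x ∈ [0,T]. -/

import Mathlib

/-- Comparison principle: if Ψ solves Ψ'' = (2m/σ²)(Ψ')² + (2ϱ/σ²)Ψ with
Ψ(0) = 0, Ψ'(0) = s̃, and φ satisfies the strict differential inequality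
φ'' < (2m/σ²)(φ')² + (2ϱ/σ²)φ with φ(0) = 0, φ'(0) = s < s̃, then
φ' ≤ Ψ' on [0,T]. -/
theorem stmt_15 (m σ ϱ T s s' : ℝ) (hm : 0 < m) (hσ : 0 < σ) (hϱ : 0 < ϱ)
    (hT : 0 < T) (hss : s < s')
    (Ψ Ψ' Ψ'' φ φ' φ'' : ℝ → ℝ)
    (hΨd1 : ∀ x ∈ Set.Icc (0:ℝ) T, HasDerivAt Ψ (Ψ' x) x)
    (hΨd2 : ∀ x ∈ Set.Icc (0:ℝ) T, HasDerivAt Ψ' (Ψ'' x) x)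
    (hΨc : ContinuousOn Ψ'' (Set.Icc (0:ℝ) T))
    (hφd1 : ∀ x ∈ Set.Icc (0:ℝ) T, HasDerivAt φ (φ' x) x)
    (hφd2 : ∀ x ∈ Set.Icc (0:ℝ) T, HasDerivAt φ' (φ'' x) x)
    (hφc : ContinuousOn φ'' (Set.Icc (0:ℝ) T))
    (hΨODE : ∀ x ∈ Set.Icc (0:ℝ) T,
      Ψ'' x = (2 * m / σ^2) * (Ψ' x)^2 + (2 * ϱ / σ^2) * Ψ x)
    (hΨ0 : Ψ 0 = 0) (hΨ'0 : Ψ' 0 = s')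
    (hφODE : ∀ x ∈ Set.Icc (0:ℝ) T,
      φ'' x < (2 * m / σ^2) * (φ' x)^2 + (2 * ϱ / σ^2) * φ x)
    (hφ0 : φ 0 = 0) (hφ'0 : φ' 0 = s) :
    ∀ x ∈ Set.Icc (0:ℝ) T, φ' x ≤ Ψ' x := by

  by_contra hcon
  push_neg at hcon
  obtain ⟨x₀, hx₀, hgx₀⟩ := hcon
  set g : ℝ → ℝ := fun x => φ' x - Ψ' x with hgdef
  have hg0 : g 0 < 0 := by simp [hgdef, hφ'0, hΨ'0, hss]
  have hgx₀pos : 0 < g x₀ := sub_pos.mpr hgx₀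
  set A : Set ℝ := Set.Icc (0:ℝ) x₀ ∩ g ⁻¹' Set.Ici 0 with hAdef
  have hgcon : ContinuousOn g (Set.Icc (0:ℝ) x₀) := fun x hx =>
    (((hφd2 x (Set.Icc_subset_Icc le_rfl hx₀.2 hx)).continuousAt.sub
      (hΨd2 x (Set.Icc_subset_Icc le_rfl hx₀.2 hx)).continuousAt)).continuousWithinAt
  have hAclosed : IsClosed A := hgcon.preimage_isClosed_of_isClosed isClosed_Icc isClosed_Ici
  have hAne : A.Nonempty := ⟨x₀, ⟨hx₀.1, le_rfl⟩, le_of_lt hgx₀pos⟩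
  have hAbdd : BddBelow A := ⟨0, fun y hy => hy.1.1⟩
  set c := sInf A with hcdef
  have hcA : c ∈ A := hAclosed.csInf_mem hAne hAbdd
  have hc0 : 0 ≤ c := hcA.1.1
  have hcx₀ : c ≤ x₀ := hcA.1.2
  have hcT : c ∈ Set.Icc (0:ℝ) T := ⟨hc0, hcx₀.trans hx₀.2⟩
  have hcpos : 0 < c := by
    rcases hc0.lt_or_eq with h | h
    · exact h
    · exact absurd (h ▸ hcA.2) (not_le.mpr hg0)
  -- g < 0 on [0, c)
  have hgneg : ∀ y ∈ Set.Ico (0:ℝ) c, g y < 0 := by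
    intro y hy
    by_contra hge
    push_neg at hge
    exact absurd (csInf_le hAbdd ⟨⟨hy.1, hy.2.le.trans hcx₀⟩, hge⟩) (not_le.mpr hy.2)
  -- g c = 0
  have hgc0 : g c = 0 := by
    refine le_antisymm ?_ hcA.2
    have htend : Filter.Tendsto g (nhdsWithin c (Set.Iio c)) (nhds (g c)) :=
      ((hφd2 c hcT).continuousAt.sub (hΨd2 c hcT).continuousAt).continuousWithinAt
    have : ∀ᶠ y in nhdsWithin c (Set.Iio c), g y ≤ 0 := by
      filter_upwards [Ioo_mem_nhdsLT_of_mem ⟨hcpos, le_rfl⟩] with y hy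
      exact (hgneg y ⟨hy.1.le, hy.2⟩).le
    exact le_of_tendsto htend this
  have hφ'c : φ' c = Ψ' c := sub_eq_zero.mp hgc0
  -- φ ≤ Ψ on [0,c] : h = φ - Ψ antitone
  have hφΨ : φ c ≤ Ψ c := by
    have hsubT : Set.Icc (0:ℝ) c ⊆ Set.Icc (0:ℝ) T :=
      Set.Icc_subset_Icc le_rfl (hcx₀.trans hx₀.2)
    have hanti : AntitoneOn (fun x => φ x - Ψ x) (Set.Icc (0:ℝ) c) := by
      apply antitoneOn_of_deriv_nonpos (convex_Icc 0 c)
      · exact fun x hx => ((hφd1 x (hsubT hx)).sub (hΨd1 x (hsubT hx))).continuousAt.continuousWithinAt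
      · intro x hx
        rw [interior_Icc] at hx
        exact ((hφd1 x (hsubT ⟨hx.1.le, hx.2.le⟩)).sub (hΨd1 x (hsubT ⟨hx.1.le, hx.2.le⟩))).differentiableAt.differentiableWithinAt
      · intro x hx
        rw [interior_Icc] at hx
        rw [show (fun x => φ x - Ψ x) = φ - Ψ from rfl, ((hφd1 x (hsubT ⟨hx.1.le, hx.2.le⟩)).sub (hΨd1 x (hsubT ⟨hx.1.le, hx.2.le⟩))).deriv]
        exact (hgneg x ⟨hx.1.le, hx.2⟩).le
    have := hanti (Set.left_mem_Icc.mpr hc0) (Set.right_mem_Icc.mpr hc0) hc0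
    simpa [hφ0, hΨ0] using this
  -- derivative of g at c
  have hgderiv : HasDerivAt g (φ'' c - Ψ'' c) c := (hφd2 c hcT).sub (hΨd2 c hcT)
  -- φ'' c - Ψ'' c < 0
  have hlt : φ'' c - Ψ'' c < 0 := by
    have h1 := hφODE c hcT
    have h2 := hΨODE c hcT
    have : (2 * m / σ^2) * (φ' c)^2 + (2 * ϱ / σ^2) * φ c ≤ Ψ'' c := by
      rw [h2, hφ'c]
      have hσ2 : (0:ℝ) < σ^2 := pow_pos hσ 2
      have : (2 * ϱ / σ^2) * φ c ≤ (2 * ϱ / σ^2) * Ψ c :=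
        mul_le_mul_of_nonneg_left hφΨ (by positivity)
      linarith
    linarith
  -- φ'' c - Ψ'' c ≥ 0 via slopes from the left
  have hge : 0 ≤ φ'' c - Ψ'' c := by
    have htend : Filter.Tendsto (slope g c) (nhdsWithin c {c}ᶜ) (nhds (φ'' c - Ψ'' c)) :=
      hasDerivAt_iff_tendsto_slope.mp hgderiv
    have htend' : Filter.Tendsto (slope g c) (nhdsWithin c (Set.Iio c)) (nhds (φ'' c - Ψ'' c)) :=
      htend.mono_left (nhdsWithin_mono c fun y hy => ne_of_lt hy)
    have hev : ∀ᶠ y in nhdsWithin c (Set.Iio c), 0 ≤ slope g c y := by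
      filter_upwards [Ioo_mem_nhdsLT_of_mem ⟨hcpos, le_rfl⟩] with y hy
      have hgy : g y ≤ 0 := (hgneg y ⟨hy.1.le, hy.2⟩).le
      rw [slope_def_field, hgc0, sub_zero]
      exact div_nonneg_iff.mpr (Or.inr ⟨hgy, by linarith [hy.2]⟩)
    exact ge_of_tendsto htend' hev
  linarith
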